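/- Let p ∈ (0,2]. Then for every x ∈ ℝ, cos x ≥ 1 − A_{p,0}·|x|^p, where A_{p,0} is the supremum of (1 − cos x)/x^p over x ∈ (0, π). Moreover, for p ∈ (0,2) equality holds if and only if x = 0, x = φ_p(0), or x = −φ_p(0); for p = 2 equality holds if and only if x = 0. -/

import Mathlib

/-- The set of values `(cos θ - cos x)/(x - θ)^p` for `x ∈ (θ, π)`. -/
noncomputable def Aset (p θ : ℝ) : Set ℝ :=
  (fun x : ℝ => (Real.cos θ - Real.cos x) / (x - θ) ^ p) '' Set.Ioo θ Real.pi

/-- `A p θ` is the supremum of `(cos θ - cos x)/(x - θ)^p` over `x ∈ (θ, π)`;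
for `θ = 0` this is the supremum of `(1 - cos x)/x^p` over `x ∈ (0, π)`. -/
noncomputable def A (p θ : ℝ) : ℝ := sSup (Aset p θ)

namespace Stmt7Aux

open Real Set

noncomputable def ff (p x : ℝ) : ℝ := (1 - Real.cos x) / x ^ p

noncomputable def kf (p x : ℝ) : ℝ := x * Real.cos (x / 2) - p * Real.sin (x / 2)

noncomputable def k1 (p x : ℝ) : ℝ :=
  Real.cos (x / 2) - x / 2 * Real.sin (x / 2) - p / 2 * Real.cos (x / 2)

lemma half_deriv (x : ℝ) : HasDerivAt (fun y : ℝ => y / 2) (1 / 2) x :=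
  (hasDerivAt_id x).div_const 2

lemma hasDerivAt_kf (p x : ℝ) : HasDerivAt (kf p) (k1 p x) x := by
  have h1 := (hasDerivAt_id x).mul (half_deriv x).cos
  have h2 := (half_deriv x).sin.const_mul p
  have h := h1.sub h2
  refine h.congr_deriv ?_
  simp only [id_eq]
  unfold k1
  ring

lemma hasDerivAt_k1 (p x : ℝ) :
    HasDerivAt (k1 p) ((p / 4 - 1) * Real.sin (x / 2) - x / 4 * Real.cos (x / 2)) x := by
  have h1 := (half_deriv x).cos
  have h2 := (half_deriv x).mul (half_deriv x).sin
  have h3 := (half_deriv x).cos.const_mul (p / 2)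
  have h := (h1.sub h2).sub h3
  refine h.congr_deriv ?_
  ring

lemma kf_cont (p : ℝ) : Continuous (kf p) := by
  unfold kf
  fun_prop

lemma kf_strictConcave {p : ℝ} (hp : p ≤ 2) : StrictConcaveOn ℝ (Icc 0 π) (kf p) := by
  apply strictConcaveOn_of_deriv2_neg (convex_Icc _ _) (kf_cont p).continuousOn
  intro x hx
  rw [interior_Icc] at hx
  have hderiv : deriv (kf p) = k1 p := funext fun y => (hasDerivAt_kf p y).deriv
  have h2 : deriv^[2] (kf p) x = (p / 4 - 1) * Real.sin (x / 2) - x / 4 * Real.cos (x / 2) := by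
    rw [Function.iterate_succ_apply', Function.iterate_one, hderiv, (hasDerivAt_k1 p x).deriv]
  rw [h2]
  have hs : 0 < Real.sin (x / 2) :=
    Real.sin_pos_of_pos_of_lt_pi (by linarith [hx.1]) (by linarith [hx.2, Real.pi_pos])
  have hc : 0 < Real.cos (x / 2) :=
    Real.cos_pos_of_mem_Ioo ⟨by linarith [hx.1, Real.pi_pos], by linarith [hx.2]⟩
  nlinarith [hx.1]

lemma kf_zero (p : ℝ) : kf p 0 = 0 := by simp [kf]

lemma kf_pos {p φ x : ℝ} (hp : p ≤ 2) (hφ : φ ∈ Ioo 0 π) (hkφ : kf p φ = 0)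
    (hx : x ∈ Ioo 0 φ) : 0 < kf p x := by
  have hcon := kf_strictConcave hp
  have hφ0 : (0 : ℝ) < φ := hφ.1
  have h0 : (0 : ℝ) ∈ Icc 0 π := ⟨le_refl 0, Real.pi_pos.le⟩
  have hφm : φ ∈ Icc 0 π := ⟨hφ.1.le, hφ.2.le⟩
  have ha : 0 < (φ - x) / φ := div_pos (by linarith [hx.2]) hφ0
  have hb : 0 < x / φ := div_pos hx.1 hφ0
  have hab : (φ - x) / φ + x / φ = 1 := by field_simp; ring
  have h := hcon.2 h0 hφm hφ0.ne ha hb hab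
  simp only [smul_eq_mul, kf_zero, hkφ, mul_zero, add_zero, zero_add] at h
  rwa [div_mul_cancel₀ x hφ0.ne'] at h

lemma kf_neg {p φ x : ℝ} (hp : p ≤ 2) (hφ : φ ∈ Ioo 0 π) (hkφ : kf p φ = 0)
    (hx : x ∈ Ioo φ π) : kf p x < 0 := by
  have hcon := kf_strictConcave hp
  have hx0 : 0 < x := hφ.1.trans hx.1
  have h0 : (0 : ℝ) ∈ Icc 0 π := ⟨le_refl 0, Real.pi_pos.le⟩
  have hxm : x ∈ Icc 0 π := ⟨hx0.le, hx.2.le⟩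
  have ha : 0 < (x - φ) / x := div_pos (by linarith [hx.1]) hx0
  have hb : 0 < φ / x := div_pos hφ.1 hx0
  have hab : (x - φ) / x + φ / x = 1 := by field_simp; ring
  have h := hcon.2 h0 hxm hx0.ne ha hb hab
  simp only [smul_eq_mul, kf_zero, mul_zero, add_zero, zero_add] at h
  rw [div_mul_cancel₀ φ hx0.ne', hkφ] at h
  nlinarith [h, hb]

lemma kf_neg2 {x : ℝ} (hx : x ∈ Ioo 0 π) : kf 2 x < 0 := by
  have h1 : 0 < x / 2 := by linarith [hx.1]
  have h2 : x / 2 < π / 2 := by linarith [hx.2]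
  have hc : 0 < Real.cos (x / 2) :=
    Real.cos_pos_of_mem_Ioo ⟨by linarith [Real.pi_pos], h2⟩
  have ht := Real.lt_tan h1 h2
  rw [Real.tan_eq_sin_div_cos, lt_div_iff₀ hc] at ht
  unfold kf
  linarith

lemma one_sub_cos (x : ℝ) : 1 - Real.cos x = 2 * Real.sin (x / 2) ^ 2 := by
  have h := Real.sin_sq_eq_half_sub (x / 2)
  rw [show 2 * (x / 2) = x by ring] at h
  linarith

lemma sin_eq (x : ℝ) : Real.sin x = 2 * Real.sin (x / 2) * Real.cos (x / 2) := by
  have h := Real.sin_two_mul (x / 2)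
  rwa [show 2 * (x / 2) = x by ring] at h

lemma hasDerivAt_ff {p : ℝ} {x : ℝ} (hx : 0 < x) :
    HasDerivAt (ff p)
      ((Real.sin x * x ^ p - (1 - Real.cos x) * (p * x ^ (p - 1))) / (x ^ p) ^ 2) x := by
  have h1 : HasDerivAt (fun y : ℝ => 1 - Real.cos y) (Real.sin x) x := by
    have := (hasDerivAt_const x (1 : ℝ)).sub (Real.hasDerivAt_cos x)
    exact this.congr_deriv (by ring)
  have h2 : HasDerivAt (fun y : ℝ => y ^ p) (p * x ^ (p - 1)) x :=
    Real.hasDerivAt_rpow_const (Or.inl hx.ne')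
  exact h1.div h2 (Real.rpow_pos_of_pos hx p).ne'

lemma deriv_ff_eq {p : ℝ} {x : ℝ} (hx : 0 < x) :
    deriv (ff p) x = x ^ (p - 1) * (2 * Real.sin (x / 2) * kf p x) / (x ^ p) ^ 2 := by
  rw [(hasDerivAt_ff hx).deriv]
  congr 1
  have hxp : x ^ p = x ^ (p - 1) * x := by
    rw [Real.rpow_sub_one hx.ne', div_mul_cancel₀ _ hx.ne']
  rw [hxp, sin_eq x, one_sub_cos x]
  unfold kf
  ring

lemma ff_cont {p : ℝ} {x : ℝ} (hx : 0 < x) : ContinuousAt (ff p) x :=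
  (hasDerivAt_ff hx).continuousAt

end Stmt7Aux

open Real Set Stmt7Aux

theorem stmt7 (p φ : ℝ) (hp : p ∈ Set.Ioc (0 : ℝ) 2)
    (hφ : p < 2 → φ ∈ Set.Ioo (0 : ℝ) Real.pi ∧
      p * (Real.cos φ - 1) + φ * Real.sin φ = 0) :
    (∀ x : ℝ, 1 - A p 0 * |x| ^ p ≤ Real.cos x) ∧
    (p < 2 → ∀ x : ℝ, (Real.cos x = 1 - A p 0 * |x| ^ p ↔ x = 0 ∨ x = φ ∨ x = -φ)) ∧
    (p = 2 → ∀ x : ℝ, (Real.cos x = 1 - A p 0 * |x| ^ p ↔ x = 0)) := by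
  obtain ⟨hp0, hp2⟩ := hp
  have hπ := Real.pi_pos
  have hAset : Aset p 0 = ff p '' Ioo 0 π := by
    unfold Aset ff
    simp [Real.cos_zero, sub_zero]
  rcases lt_or_eq_of_le hp2 with hplt | hpeq
  · -- case p < 2
    obtain ⟨hφmem, hφeq⟩ := hφ hplt
    have hφ0 : 0 < φ := hφmem.1
    have hφπ : φ < π := hφmem.2
    have hsφ : 0 < Real.sin (φ / 2) :=
      Real.sin_pos_of_pos_of_lt_pi (by linarith) (by linarith)
    have hkφ : kf p φ = 0 := by
      have h1 : p * (-(2 * Real.sin (φ / 2) ^ 2)) +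
          φ * (2 * Real.sin (φ / 2) * Real.cos (φ / 2)) = 0 := by
        rw [← sin_eq φ]
        have h2 := one_sub_cos φ
        have : Real.cos φ - 1 = -(2 * Real.sin (φ / 2) ^ 2) := by linarith
        rw [← this]
        exact hφeq
      have key : 2 * Real.sin (φ / 2) * kf p φ = 0 := by
        unfold kf; linear_combination h1
      rcases mul_eq_zero.1 key with h | h
      · exact absurd h (by positivity)
      · exact h
    have hkpos : ∀ x ∈ Ioo 0 φ, 0 < kf p x := fun x hx => kf_pos hplt.le hφmem hkφ hx
    have hkneg : ∀ x ∈ Ioo φ π, kf p x < 0 := fun x hx => kf_neg hplt.le hφmem hkφ hx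
    have hmono : StrictMonoOn (ff p) (Ioc 0 φ) := by
      apply strictMonoOn_of_deriv_pos (convex_Ioc 0 φ)
      · exact fun x hx => (ff_cont hx.1).continuousWithinAt
      · rw [interior_Ioc]
        intro x hx
        rw [deriv_ff_eq hx.1]
        have hs : 0 < Real.sin (x / 2) :=
          Real.sin_pos_of_pos_of_lt_pi (by linarith [hx.1]) (by linarith [hx.2])
        have hk := hkpos x hx
        have h1 : 0 < x ^ (p - 1) := Real.rpow_pos_of_pos hx.1 _
        have h3 : 0 < (x ^ p) ^ 2 := pow_pos (Real.rpow_pos_of_pos hx.1 p) 2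
        exact div_pos (mul_pos h1 (mul_pos (mul_pos two_pos hs) hk)) h3
    have hanti : StrictAntiOn (ff p) (Icc φ π) := by
      apply strictAntiOn_of_deriv_neg (convex_Icc φ π)
      · exact fun x hx => (ff_cont (hφ0.trans_le hx.1)).continuousWithinAt
      · rw [interior_Icc]
        intro x hx
        have hx0 : 0 < x := hφ0.trans hx.1
        rw [deriv_ff_eq hx0]
        have hs : 0 < Real.sin (x / 2) :=
          Real.sin_pos_of_pos_of_lt_pi (by linarith) (by linarith [hx.2])
        have hk := hkneg x hx
        have h1 : 0 < x ^ (p - 1) := Real.rpow_pos_of_pos hx0 _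
        have h3 : 0 < (x ^ p) ^ 2 := pow_pos (Real.rpow_pos_of_pos hx0 p) 2
        exact div_neg_of_neg_of_pos
          (mul_neg_of_pos_of_neg h1 (mul_neg_of_pos_of_neg (mul_pos two_pos hs) hk)) h3
    have hmax : ∀ x ∈ Ioo 0 π, x ≠ φ → ff p x < ff p φ := by
      intro x hx hne
      rcases lt_or_gt_of_ne hne with hlt | hgt
      · exact hmono ⟨hx.1, hlt.le⟩ ⟨hφ0, le_refl φ⟩ hlt
      · exact hanti ⟨le_refl φ, hφπ.le⟩ ⟨hgt.le, hx.2.le⟩ hgt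
    have hgreat : IsGreatest (Aset p 0) (ff p φ) := by
      rw [hAset]
      constructor
      · exact ⟨φ, hφmem, rfl⟩
      · rintro y ⟨x, hx, rfl⟩
        rcases eq_or_ne x φ with rfl | hne
        · exact le_refl _
        · exact (hmax x hx hne).le
    have hA : A p 0 = ff p φ := hgreat.csSup_eq
    have hcosφ : Real.cos φ < 1 := by
      have := one_sub_cos φ
      nlinarith [hsφ]
    have hApos : 0 < A p 0 := by
      rw [hA]
      unfold ff
      exact div_pos (by linarith) (Real.rpow_pos_of_pos hφ0 p)
    have hAπ : 2 < A p 0 * π ^ p := by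
      have hππ : 0 < (π : ℝ) ^ p := Real.rpow_pos_of_pos hπ p
      have h1 : ff p π < ff p φ := hanti ⟨le_refl φ, hφπ.le⟩ ⟨hφπ.le, le_refl π⟩ hφπ
      have h2 : ff p π = 2 / π ^ p := by unfold ff; rw [Real.cos_pi]; norm_num
      rw [h2] at h1
      rw [hA]
      exact (div_lt_iff₀ hππ).1 h1
    have hub : ∀ t : ℝ, 0 < t → t < π → 1 - Real.cos t ≤ A p 0 * t ^ p := by
      intro t ht0 htπ
      have hmem : ff p t ∈ Aset p 0 := by rw [hAset]; exact ⟨t, ⟨ht0, htπ⟩, rfl⟩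
      have hle : ff p t ≤ A p 0 := by rw [hA]; exact hgreat.2 hmem
      have htp : 0 < t ^ p := Real.rpow_pos_of_pos ht0 p
      calc 1 - Real.cos t = ff p t * t ^ p := by
            unfold ff; rw [div_mul_cancel₀ _ htp.ne']
        _ ≤ A p 0 * t ^ p := mul_le_mul_of_nonneg_right hle htp.le
    have hbig : ∀ t : ℝ, π ≤ t → 1 - Real.cos t < A p 0 * t ^ p := by
      intro t htπ
      have h2 : 1 - Real.cos t ≤ 2 := by linarith [Real.neg_one_le_cos t]
      have h3 : A p 0 * π ^ p ≤ A p 0 * t ^ p :=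
        mul_le_mul_of_nonneg_left (Real.rpow_le_rpow hπ.le htπ hp0.le) hApos.le
      linarith
    have hineq : ∀ x : ℝ, 1 - A p 0 * |x| ^ p ≤ Real.cos x := by
      intro x
      rw [← Real.cos_abs]
      rcases eq_or_lt_of_le (abs_nonneg x) with h0 | hpos
      · rw [← h0]
        simp [Real.zero_rpow hp0.ne']
      rcases lt_or_ge |x| π with htπ | htπ
      · linarith [hub |x| hpos htπ]
      · linarith [hbig |x| htπ]
    have hφeq' : Real.cos φ = 1 - A p 0 * |φ| ^ p := by
      rw [abs_of_pos hφ0, hA]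
      unfold ff
      rw [div_mul_cancel₀ _ (Real.rpow_pos_of_pos hφ0 p).ne']
      ring
    refine ⟨hineq, fun _ => ?_, fun hpe => absurd hpe hplt.ne⟩
    intro x
    constructor
    · intro hx
      rcases eq_or_ne x 0 with rfl | hx0
      · exact Or.inl rfl
      right
      have ht0 : 0 < |x| := abs_pos.2 hx0
      have hcx : Real.cos |x| = 1 - A p 0 * |x| ^ p := by rw [Real.cos_abs]; exact hx
      have habs : |x| = φ := by
        by_contra hne
        rcases lt_or_ge |x| π with htπ | htπ
        · have hlt : ff p |x| < ff p φ := hmax _ ⟨ht0, htπ⟩ hne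
          have htp : 0 < |x| ^ p := Real.rpow_pos_of_pos ht0 p
          have h5 : ff p |x| = A p 0 := by
            unfold ff
            rw [show 1 - Real.cos |x| = A p 0 * |x| ^ p by linarith,
              mul_div_cancel_right₀ _ htp.ne']
          rw [hA] at h5
          linarith
        · have := hbig |x| htπ
          linarith
      exact (abs_eq hφ0.le).1 habs
    · rintro (rfl | rfl | rfl)
      · simp [Real.zero_rpow hp0.ne']
      · exact hφeq'
      · rw [Real.cos_neg, abs_neg]; exact hφeq'
  · -- case p = 2
    subst hpeq
    have hπ3 : (3 : ℝ) < π := Real.pi_gt_three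
    have hub : ∀ y ∈ Aset 2 0, y ≤ 1 / 2 := by
      rw [hAset]
      rintro y ⟨x, hx, rfl⟩
      unfold ff
      have hx2 : (0 : ℝ) < x ^ (2 : ℝ) := Real.rpow_pos_of_pos hx.1 _
      rw [div_le_iff₀ hx2, Real.rpow_two]
      nlinarith [Real.one_sub_sq_div_two_lt_cos (x := x) hx.1.ne']
    have hbdd : BddAbove (Aset 2 0) := ⟨1 / 2, hub⟩
    have hne : (Aset 2 0).Nonempty := by
      rw [hAset]
      exact ⟨ff 2 1, 1, ⟨one_pos, by linarith⟩, rfl⟩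
    have hA : A 2 0 = 1 / 2 := by
      apply le_antisymm (csSup_le hne hub)
      by_contra hlt
      push_neg at hlt
      set S := A 2 0 with hS
      have hlt' : S < 1 / 2 := hlt
      have hε0 : 0 < 1 / 2 - S := by linarith
      set x := min 1 (Real.sqrt (1 / 2 - S)) with hxdef
      have hx0 : 0 < x := lt_min one_pos (Real.sqrt_pos.2 hε0)
      have hx1 : x ≤ 1 := min_le_left _ _
      have hxπ : x < π := by linarith
      have hmem : ff 2 x ∈ Aset 2 0 := by rw [hAset]; exact ⟨x, ⟨hx0, hxπ⟩, rfl⟩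
      have hle : ff 2 x ≤ S := le_csSup hbdd hmem
      have hcb := Real.cos_bound (x := x) (by rw [abs_of_pos hx0]; exact hx1)
      have habs := abs_le.1 hcb
      rw [abs_of_pos hx0] at habs
      have hx2ε : x ^ 2 ≤ 1 / 2 - S := by
        have h := min_le_right 1 (Real.sqrt (1 / 2 - S))
        nlinarith [Real.sq_sqrt hε0.le, Real.sqrt_nonneg (1 / 2 - S), hx0]
      have hffx : 1 / 2 - x ^ 2 * (5 / 96) ≤ ff 2 x := by
        unfold ff
        rw [Real.rpow_two, le_div_iff₀ (pow_pos hx0 2)]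
        nlinarith [habs.2, hx0, hx1]
      linarith [hle, hffx, hx2ε, hlt']
    refine ⟨?_, fun hlt2 => absurd hlt2 (lt_irrefl 2), fun _ => ?_⟩
    · intro x
      rw [hA, Real.rpow_two, sq_abs]
      nlinarith [Real.one_sub_sq_div_two_le_cos (x := x)]
    · intro x
      rw [hA, Real.rpow_two, sq_abs]
      constructor
      · intro h
        by_contra hx0
        nlinarith [Real.one_sub_sq_div_two_lt_cos (x := x) hx0]
      · rintro rfl
        norm_num
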